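/- arXiv:2409.05671 — 2 statements merged into one kernel-verified Lean document; each statement's English description precedes it below -/
import Mathlib

section
/- Let x, y, s ∈ 𝕂² and let 0 < α < π. Then the hyperbolic cosine rule cosh(d(x,y)) = cosh(d(x,s))·cosh(d(y,s)) − sinh(d(x,s))·sinh(d(y,s))·cos(α) holds if and only if φ_{x,y,α}(s) = 0. (This is the characterization of the isoptic curve C_α(x,y) in the Klein–Beltrami model: the locus of points s at which the segments to x and to y subtend the angle α.) -/
/-- Lorentzian inner product in homogeneous coordinates: `⟨u,v⟩ = u⋅v − 1`. -/
noncomputable def lorentz (u v : EuclideanSpace ℝ (Fin 2)) : ℝ :=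
  (inner ℝ u v : ℝ) - 1

/-- Inverse hyperbolic cosine: `arcosh t = log (t + √(t² − 1))`. -/
noncomputable def arcosh (t : ℝ) : ℝ := Real.log (t + Real.sqrt (t ^ 2 - 1))

/-- The hyperbolic distance on the Klein–Beltrami disk. -/
noncomputable def kleinDist (x y : EuclideanSpace ℝ (Fin 2)) : ℝ :=
  arcosh (-(lorentz x y) / Real.sqrt (lorentz x x * lorentz y y))

/-- The isoptic-curve expression `φ_{x,y,α}(s)` in the Klein–Beltrami model. -/
noncomputable def phiKB (x y : EuclideanSpace ℝ (Fin 2)) (α : ℝ)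
    (s : EuclideanSpace ℝ (Fin 2)) : ℝ :=
  lorentz x s * lorentz y s - lorentz x y * lorentz s s -
    Real.cos α * Real.sqrt ((lorentz x s ^ 2 - lorentz x x * lorentz s s) *
      (lorentz y s ^ 2 - lorentz y y * lorentz s s))

lemma inv_arg_arcosh {t : ℝ} (ht : 1 ≤ t) :
    (t + Real.sqrt (t ^ 2 - 1))⁻¹ = t - Real.sqrt (t ^ 2 - 1) := by
  have h1 : (0:ℝ) ≤ t ^ 2 - 1 := by nlinarith
  have hs : Real.sqrt (t ^ 2 - 1) ^ 2 = t ^ 2 - 1 := Real.sq_sqrt h1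
  have hpos : 0 < t + Real.sqrt (t ^ 2 - 1) := by
    have := Real.sqrt_nonneg (t ^ 2 - 1); linarith
  exact inv_eq_of_mul_eq_one_right (by nlinarith)

lemma cosh_arcosh {t : ℝ} (ht : 1 ≤ t) : Real.cosh (arcosh t) = t := by
  have hpos : 0 < t + Real.sqrt (t ^ 2 - 1) := by
    have := Real.sqrt_nonneg (t ^ 2 - 1); linarith
  rw [arcosh, Real.cosh_eq, Real.exp_neg, Real.exp_log hpos, inv_arg_arcosh ht]
  ring

lemma sinh_arcosh {t : ℝ} (ht : 1 ≤ t) : Real.sinh (arcosh t) = Real.sqrt (t ^ 2 - 1) := by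
  have hpos : 0 < t + Real.sqrt (t ^ 2 - 1) := by
    have := Real.sqrt_nonneg (t ^ 2 - 1); linarith
  rw [arcosh, Real.sinh_eq, Real.exp_log hpos, Real.exp_neg, Real.exp_log hpos,
    inv_arg_arcosh ht]
  ring

lemma lorentz_neg {x y : EuclideanSpace ℝ (Fin 2)} (hx : ‖x‖ < 1) (hy : ‖y‖ < 1) :
    lorentz x y < 0 := by
  have h := real_inner_le_norm x y
  have hx0 := norm_nonneg x
  have hy0 := norm_nonneg y
  have : ‖x‖ * ‖y‖ < 1 := by nlinarith
  rw [lorentz]; linarith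

lemma lorentz_cs {x y : EuclideanSpace ℝ (Fin 2)} (hx : ‖x‖ < 1) :
    lorentz x x * lorentz y y ≤ lorentz x y ^ 2 := by
  have h1 : ‖x - y‖ ^ 2 = ‖x‖ ^ 2 - 2 * (inner ℝ x y : ℝ) + ‖y‖ ^ 2 := norm_sub_sq_real x y
  have h2 : (0:ℝ) ≤ ‖x - y‖ ^ 2 := sq_nonneg _
  have h3 : ‖x‖ ^ 2 ≤ 1 := by nlinarith [norm_nonneg x]
  simp only [lorentz, real_inner_self_eq_norm_sq]
  nlinarith [sq_nonneg ((inner ℝ x y : ℝ) - ‖x‖ ^ 2),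
    mul_nonneg (by linarith : (0:ℝ) ≤ 1 - ‖x‖ ^ 2) h2]

/-- Characterization of the isoptic curve `C_α(x,y)` in the Klein–Beltrami model:
the hyperbolic cosine rule at `s` with angle `α` holds iff `φ_{x,y,α}(s) = 0`. -/
theorem isoptic_curve_klein (x y s : EuclideanSpace ℝ (Fin 2))
    (hx : ‖x‖ < 1) (hy : ‖y‖ < 1) (hs : ‖s‖ < 1)
    (α : ℝ) (hα₀ : 0 < α) (hαπ : α < Real.pi) :
    (Real.cosh (kleinDist x y)
        = Real.cosh (kleinDist x s) * Real.cosh (kleinDist y s)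
          - Real.sinh (kleinDist x s) * Real.sinh (kleinDist y s) * Real.cos α)
      ↔ phiKB x y α s = 0 := by
  set A := lorentz x x with hA'
  set B := lorentz y y with hB'
  set C := lorentz s s with hC'
  set P := lorentz x y with hP'
  set Q := lorentz x s with hQ'
  set R := lorentz y s with hR'
  have hA : A < 0 := lorentz_neg hx hx
  have hB : B < 0 := lorentz_neg hy hy
  have hC : C < 0 := lorentz_neg hs hs
  have hP : P < 0 := lorentz_neg hx hy
  have hQ : Q < 0 := lorentz_neg hx hs
  have hR : R < 0 := lorentz_neg hy hs
  have hPcs : A * B ≤ P ^ 2 := lorentz_cs hx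
  have hQcs : A * C ≤ Q ^ 2 := lorentz_cs hx
  have hRcs : B * C ≤ R ^ 2 := lorentz_cs hy
  have hAB : 0 < A * B := mul_pos_of_neg_of_neg hA hB
  have hAC : 0 < A * C := mul_pos_of_neg_of_neg hA hC
  have hBC : 0 < B * C := mul_pos_of_neg_of_neg hB hC
  -- the three square roots of products
  have sAB := Real.sqrt_pos.mpr hAB
  have sAC := Real.sqrt_pos.mpr hAC
  have sBC := Real.sqrt_pos.mpr hBC
  -- arcosh arguments are ≥ 1
  have key : ∀ U V : ℝ, U < 0 → 0 < V → V ≤ U ^ 2 → 1 ≤ -U / Real.sqrt V := by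
    intro U V hU hV hUV
    rw [le_div_iff₀ (Real.sqrt_pos.mpr hV), one_mul]
    calc Real.sqrt V ≤ Real.sqrt (U ^ 2) := Real.sqrt_le_sqrt hUV
      _ = |U| := Real.sqrt_sq_eq_abs U
      _ = -U := abs_of_neg hU
  have h1 : 1 ≤ -P / Real.sqrt (A * B) := key P (A*B) hP hAB hPcs
  have h2 : 1 ≤ -Q / Real.sqrt (A * C) := key Q (A*C) hQ hAC hQcs
  have h3 : 1 ≤ -R / Real.sqrt (B * C) := key R (B*C) hR hBC hRcs
  -- rewrite cosh / sinh
  have hsinh : ∀ U V : ℝ, 0 < V → V ≤ U ^ 2 →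
      Real.sqrt ((-U / Real.sqrt V) ^ 2 - 1) = Real.sqrt (U ^ 2 - V) / Real.sqrt V := by
    intro U V hV hUV
    have hsV : Real.sqrt V ^ 2 = V := Real.sq_sqrt hV.le
    have hsVpos := Real.sqrt_pos.mpr hV
    have h : (-U / Real.sqrt V) ^ 2 - 1 = (U ^ 2 - V) / V := by
      field_simp
      rw [hsV]; ring
    rw [h, Real.sqrt_div (by linarith)]
  have hkxy : Real.cosh (kleinDist x y) = -P / Real.sqrt (A * B) := by
    rw [kleinDist, cosh_arcosh h1]
  have hkxs : Real.cosh (kleinDist x s) = -Q / Real.sqrt (A * C) := by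
    rw [kleinDist, cosh_arcosh h2]
  have hkys : Real.cosh (kleinDist y s) = -R / Real.sqrt (B * C) := by
    rw [kleinDist, cosh_arcosh h3]
  have hsxs : Real.sinh (kleinDist x s) = Real.sqrt (Q ^ 2 - A * C) / Real.sqrt (A * C) := by
    rw [kleinDist, sinh_arcosh h2, hsinh Q (A*C) hAC hQcs]
  have hsys : Real.sinh (kleinDist y s) = Real.sqrt (R ^ 2 - B * C) / Real.sqrt (B * C) := by
    rw [kleinDist, sinh_arcosh h3, hsinh R (B*C) hBC hRcs]
  set u := Real.sqrt (Q ^ 2 - A * C) with hu'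
  set v := Real.sqrt (R ^ 2 - B * C) with hv'
  have hu : 0 ≤ u := Real.sqrt_nonneg _
  have hv : 0 ≤ v := Real.sqrt_nonneg _
  -- phiKB in these variables
  have hphi : phiKB x y α s = Q * R - P * C - Real.cos α * (u * v) := by
    rw [phiKB, hu', hv', ← Real.sqrt_mul (by linarith)]
  -- relation between the square roots
  have hrel : Real.sqrt (A * C) * Real.sqrt (B * C) = Real.sqrt (A * B) * (-C) := by
    rw [← Real.sqrt_mul hAC.le]
    have : A * C * (B * C) = (A * B) * C ^ 2 := by ring
    rw [this, Real.sqrt_mul hAB.le, Real.sqrt_sq_eq_abs, abs_of_neg hC]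
  rw [hkxy, hkxs, hkys, hsxs, hsys, hphi]
  have hform : -Q / Real.sqrt (A * C) * (-R / Real.sqrt (B * C))
      - u / Real.sqrt (A * C) * (v / Real.sqrt (B * C)) * Real.cos α
      = (Q * R - Real.cos α * (u * v)) / (Real.sqrt (A * B) * (-C)) := by
    rw [← hrel]
    field_simp
  have hCn : (0:ℝ) < -C := by linarith
  rw [hform, div_eq_div_iff sAB.ne' (mul_pos sAB hCn).ne']
  constructor
  · intro h
    have h' : (P * C) * Real.sqrt (A * B)
        = (Q * R - Real.cos α * (u * v)) * Real.sqrt (A * B) := by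
      linear_combination h
    have := mul_right_cancel₀ (ne_of_gt sAB) h'
    linarith
  · intro h
    linear_combination (-(Real.sqrt (A * B))) * h
end

section
/- Let x, y ∈ 𝕂² and let 0 < α < π. For every s ∈ 𝕂², ψ_{x,y,α}(s) = 0 if and only if φ_{x,y,α}(s) = 0 or φ_{x,y,π−α}(s) = 0. (The zero locus of the quartic polynomial ψ_{x,y,α} in the Klein–Beltrami model is exactly the union of isoptic curves C_α(x,y) ∪ C_{π−α}(x,y).) -/
/-- The quartic polynomial expression `ψ_{x,y,α}(s)` in the Klein–Beltrami model. -/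
noncomputable def psiKB (x y : EuclideanSpace ℝ (Fin 2)) (α : ℝ)
    (s : EuclideanSpace ℝ (Fin 2)) : ℝ :=
  lorentz x s ^ 2 * lorentz y s ^ 2 + lorentz x y ^ 2 * lorentz s s ^ 2
    - 2 * lorentz x s * lorentz y s * lorentz x y * lorentz s s
    - Real.cos α ^ 2 * lorentz x s ^ 2 * lorentz y s ^ 2
    - Real.cos α ^ 2 * lorentz x x * lorentz y y * lorentz s s ^ 2
    + Real.cos α ^ 2 * lorentz y s ^ 2 * lorentz x x * lorentz s s
    + Real.cos α ^ 2 * lorentz x s ^ 2 * lorentz y y * lorentz s s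

/-- Reversed Cauchy–Schwarz for points inside the disk. -/
lemma lorentz_discr_nonneg (u v : EuclideanSpace ℝ (Fin 2))
    (hu : ‖u‖ < 1) (hv : ‖v‖ < 1) :
    0 ≤ lorentz u v ^ 2 - lorentz u u * lorentz v v := by
  have h1 : (inner ℝ u v : ℝ) ≤ ‖u‖ * ‖v‖ := real_inner_le_norm u v
  have h2 : (inner ℝ u u : ℝ) = ‖u‖ ^ 2 := real_inner_self_eq_norm_sq u
  have h3 : (inner ℝ v v : ℝ) = ‖v‖ ^ 2 := real_inner_self_eq_norm_sq v
  have hu0 : 0 ≤ ‖u‖ := norm_nonneg u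
  have hv0 : 0 ≤ ‖v‖ := norm_nonneg v
  have hab : ‖u‖ * ‖v‖ < 1 := by nlinarith
  simp only [lorentz, h2, h3]
  nlinarith [sq_nonneg (‖u‖ - ‖v‖),
    mul_nonneg (sub_nonneg.2 h1)
      (by nlinarith : (0:ℝ) ≤ 2 - (inner ℝ u v : ℝ) - ‖u‖ * ‖v‖)]

/-- The zero locus of `ψ_{x,y,α}` inside the Klein–Beltrami disk is exactly
the union of isoptic curves `C_α(x,y) ∪ C_{π−α}(x,y)`. -/
theorem psi_zero_iff (x y : EuclideanSpace ℝ (Fin 2))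
    (hx : ‖x‖ < 1) (hy : ‖y‖ < 1)
    (α : ℝ) (hα₀ : 0 < α) (hαπ : α < Real.pi) :
    ∀ s : EuclideanSpace ℝ (Fin 2), ‖s‖ < 1 →
      (psiKB x y α s = 0 ↔ phiKB x y α s = 0 ∨ phiKB x y (Real.pi - α) s = 0) := by
  intro s hs
  have hP : 0 ≤ (lorentz x s ^ 2 - lorentz x x * lorentz s s) *
      (lorentz y s ^ 2 - lorentz y y * lorentz s s) :=
    mul_nonneg (lorentz_discr_nonneg x s hx hs) (lorentz_discr_nonneg y s hy hs)
  have hsq : Real.sqrt ((lorentz x s ^ 2 - lorentz x x * lorentz s s) *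
      (lorentz y s ^ 2 - lorentz y y * lorentz s s)) ^ 2 =
      (lorentz x s ^ 2 - lorentz x x * lorentz s s) *
      (lorentz y s ^ 2 - lorentz y y * lorentz s s) := Real.sq_sqrt hP
  have heq : psiKB x y α s = phiKB x y α s * phiKB x y (Real.pi - α) s := by
    simp only [phiKB, psiKB, Real.cos_pi_sub]
    nlinarith [hsq]
  rw [heq, mul_eq_zero]
end
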